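/- Let V be a principal ideal domain (e.g., a discrete valuation ring) and R = V[x₁,…,x_n] with the total degree filtration (𝓕_m R = span of monomials of total degree ≤ m). Then R is filtered Noetherian: for every ideal I ⊆ R there exist finitely many f₁,…,f_N ∈ I and l ∈ ℕ such that every g ∈ I with total degree ≤ m can be written g = Σ p_j f_j with p_j ∈ 𝓕_{m+l} R (in fact one can take l = 0, i.e., deg(p_j f_j) ≤ deg(g)). -/

import Mathlib

/-!
Statement 15: Let `V` be a principal ideal domain and `R = V[x₁,…,x_n]` with the total
degree filtration.  Then `R` is filtered Noetherian: every ideal `I` has finitely many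
generators `f₁,…,f_N ∈ I` such that every `g ∈ I` of total degree `≤ m` can be written as
`g = Σ p_j f_j` with `p_j` of total degree `≤ m` and moreover `deg(p_j f_j) ≤ m`
(i.e. one can take the shift `l = 0`).
-/

open MvPolynomial Finsupp

section Aux

variable {V : Type} [CommRing V] {n : ℕ}

/-- Dehomogenization: send variable `0` to `1`. -/
noncomputable def deh (n : ℕ) (V : Type) [CommRing V] :
    MvPolynomial (Fin (n + 1)) V →ₐ[V] MvPolynomial (Fin n) V :=
  aeval (Fin.cases 1 X)

lemma finsupp_sum_eq (k : ℕ) (f : Fin k →₀ ℕ) : (f.sum fun _ e => e) = ∑ i, f i := by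
  rw [Finsupp.sum]
  exact Finset.sum_subset (Finset.subset_univ _)
    (fun i _ h => Finsupp.notMem_support_iff.mp h)

lemma sumCons (a : ℕ) (μ : Fin n →₀ ℕ) :
    ((Finsupp.cons a μ).sum fun _ e => e) = a + (μ.sum fun _ e => e) := by
  rw [finsupp_sum_eq, finsupp_sum_eq, Fin.sum_univ_succ, Finsupp.cons_zero]
  simp [Finsupp.cons_succ]

lemma cons_eq_single_add (a : ℕ) (μ : Fin n →₀ ℕ) :
    (Finsupp.cons a μ : Fin (n + 1) →₀ ℕ)
      = Finsupp.single 0 a + Finsupp.mapDomain Fin.succ μ := by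
  ext i
  refine Fin.cases ?_ (fun j => ?_) i
  · rw [Finsupp.cons_zero, Finsupp.add_apply, Finsupp.single_apply, if_pos rfl,
      Finsupp.mapDomain_notin_range]
    · simp
    · rintro ⟨j, hj⟩; exact Fin.succ_ne_zero j hj
  · rw [Finsupp.cons_succ, Finsupp.add_apply, Finsupp.single_apply,
      if_neg (Fin.succ_ne_zero j).symm,
      Finsupp.mapDomain_apply (Fin.succ_injective n)]
    simp

lemma deh_monomial_cons (a : ℕ) (μ : Fin n →₀ ℕ) (c : V) :
    deh n V (monomial (Finsupp.cons a μ) c) = monomial μ c := by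
  rw [cons_eq_single_add, ← one_mul c, ← monomial_mul, ← X_pow_eq_monomial,
    ← rename_monomial, map_mul, map_pow]
  have h0 : deh n V (X 0) = 1 := by
    rw [deh, aeval_X]; rfl
  have h1 : deh n V (rename Fin.succ (monomial μ c)) = monomial μ c := by
    rw [deh, aeval_rename]
    have : (Fin.cases 1 X ∘ Fin.succ : Fin n → MvPolynomial (Fin n) V) = X := by
      funext j; simp
    rw [this, aeval_X_left_apply]
  rw [h0, h1, one_pow, one_mul, one_mul]


lemma deh_totalDegree_le (h : MvPolynomial (Fin (n + 1)) V) :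
    (deh n V h).totalDegree ≤ h.totalDegree := by
  conv_lhs => rw [h.as_sum]
  rw [map_sum]
  refine (totalDegree_finset_sum _ _).trans (Finset.sup_le fun s hs => ?_)
  have hkey : deh n V (monomial s (coeff s h)) = monomial (Finsupp.tail s) (coeff s h) := by
    conv_lhs => rw [← Finsupp.cons_tail s, deh_monomial_cons, Finsupp.cons_tail s]
  rw [hkey]
  refine (totalDegree_monomial_le _ _).trans ?_
  have h1 := le_totalDegree hs
  have h2 : ((Finsupp.tail s).sum fun _ e => e) ≤ s.sum fun _ e => e := by
    conv_rhs => rw [← Finsupp.cons_tail s]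
    rw [sumCons]
    omega
  exact le_trans h2 h1

/-- Homogenization of `g` to degree `d`. -/
noncomputable def homz (d : ℕ) (g : MvPolynomial (Fin n) V) :
    MvPolynomial (Fin (n + 1)) V :=
  ∑ μ ∈ g.support, monomial (Finsupp.cons (d - μ.sum fun _ e => e) μ) (coeff μ g)

lemma deh_homz (d : ℕ) (g : MvPolynomial (Fin n) V) : deh n V (homz d g) = g := by
  rw [homz, map_sum]
  simp_rw [deh_monomial_cons]
  exact g.support_sum_monomial_coeff

lemma homz_isHomogeneous (d : ℕ) (g : MvPolynomial (Fin n) V)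
    (hg : g.totalDegree ≤ d) : (homz d g).IsHomogeneous d := by
  rw [← mem_homogeneousSubmodule]
  refine sum_mem fun μ hμ => ?_
  rw [mem_homogeneousSubmodule]
  refine isHomogeneous_monomial _ ?_
  have h1 := le_totalDegree hμ
  have hdeg : ((Finsupp.cons (d - μ.sum fun _ e => e) μ : Fin (n+1) →₀ ℕ)).degree
      = ((Finsupp.cons (d - μ.sum fun _ e => e) μ : Fin (n+1) →₀ ℕ)).sum fun _ e => e := rfl
  rw [hdeg, sumCons]
  omega

lemma homogeneousComponent_mul_right {σ : Type} (q h : MvPolynomial σ V) {d : ℕ} (m : ℕ)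
    (hh : h.IsHomogeneous d) :
    homogeneousComponent m (q * h) =
      (if d ≤ m then homogeneousComponent (m - d) q else 0) * h := by
  conv_lhs => rw [← q.sum_homogeneousComponent]
  rw [Finset.sum_mul, map_sum]
  have key : ∀ i, homogeneousComponent m (homogeneousComponent i q * h)
      = if m = i + d then homogeneousComponent i q * h else 0 :=
    fun i => homogeneousComponent_of_mem ((homogeneousComponent_isHomogeneous i q).mul hh)
  simp_rw [key]
  by_cases hdm : d ≤ m
  · rw [if_pos hdm]
    have hcond : ∀ i : ℕ, (m = i + d) = (i = m - d) := fun i => by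
      rw [eq_iff_iff]; omega
    simp_rw [hcond]
    rw [Finset.sum_ite_eq' _ (m - d) (fun i => homogeneousComponent i q * h)]
    by_cases hmem : m - d ∈ Finset.range (q.totalDegree + 1)
    · rw [if_pos hmem]
    · rw [if_neg hmem, homogeneousComponent_eq_zero, zero_mul]
      simp only [Finset.mem_range, not_lt] at hmem
      omega
  · rw [if_neg hdm, zero_mul]
    refine Finset.sum_eq_zero fun i _ => ?_
    rw [if_neg (by omega)]

end Aux

theorem mvPolynomial_filtered_noetherian
    (V : Type) [CommRing V] [IsDomain V] [IsPrincipalIdealRing V]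
    (n : ℕ) (I : Ideal (MvPolynomial (Fin n) V)) :
    ∃ (N : ℕ) (f : Fin N → MvPolynomial (Fin n) V),
      (∀ i, f i ∈ I) ∧
      ∀ g ∈ I, ∀ m : ℕ, g.totalDegree ≤ m →
        ∃ p : Fin N → MvPolynomial (Fin n) V,
          g = ∑ i, p i * f i ∧
          ∀ i, (p i).totalDegree ≤ m ∧ (p i * f i).totalDegree ≤ m := by
  classical
  set S : Set (MvPolynomial (Fin (n + 1)) V) :=
    {h | (∃ d, h.IsHomogeneous d) ∧ deh n V h ∈ I} with hS
  -- extract a finite subset of S spanning the same ideal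
  obtain ⟨T, hTS, hTspan⟩ : ∃ T : Finset (MvPolynomial (Fin (n + 1)) V),
      ↑T ⊆ S ∧ Ideal.span (T : Set _) = Ideal.span S := by
    have hfg : (Ideal.span S).FG := IsNoetherian.noetherian _
    obtain ⟨G, hG⟩ := hfg
    choose t ht1 ht2 using fun (x : G) =>
      Submodule.mem_span_finite_of_mem_span (R := MvPolynomial (Fin (n + 1)) V) (S := S)
        (x := (x : MvPolynomial (Fin (n + 1)) V))
        (show (x : MvPolynomial (Fin (n + 1)) V) ∈ Ideal.span S by
          rw [← hG]; exact Ideal.subset_span x.2)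
    refine ⟨G.attach.biUnion t, ?_, le_antisymm ?_ ?_⟩
    · intro y hy
      simp only [Finset.coe_biUnion, Set.mem_iUnion, Finset.mem_coe] at hy
      obtain ⟨x, -, hx⟩ := hy
      exact ht1 x hx
    · rw [Ideal.span_le]
      intro y hy
      simp only [Finset.coe_biUnion, Set.mem_iUnion, Finset.mem_coe] at hy
      obtain ⟨x, -, hx⟩ := hy
      exact Ideal.subset_span (ht1 x hx)
    · rw [← hG, Ideal.span_le]
      intro y hy
      refine Submodule.span_mono ?_ (ht2 ⟨y, hy⟩)
      intro z hz
      simp only [Finset.coe_biUnion, Set.mem_iUnion, Finset.mem_coe]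
      exact ⟨⟨y, hy⟩, Finset.mem_attach _ _, hz⟩
  -- degrees of the generators
  choose dt hdt using fun (t : {x // x ∈ T}) => (hTS t.2).1
  set N := T.card
  set e : {x // x ∈ T} ≃ Fin N := T.equivFin
  refine ⟨N, fun i => deh n V (e.symm i : MvPolynomial (Fin (n + 1)) V),
    fun i => (hTS (e.symm i).2).2, ?_⟩
  intro g hg m hm
  set d := g.totalDegree with hd
  set h := homz d g with hh
  have hhom : h.IsHomogeneous d := homz_isHomogeneous d g le_rfl
  have hhS : h ∈ Ideal.span (T : Set _) := by
    rw [hTspan]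
    exact Ideal.subset_span ⟨⟨d, hhom⟩, by rw [hh, deh_homz]; exact hg⟩
  obtain ⟨q, -, hq⟩ := Submodule.mem_span_finset.mp hhS
  -- the degree-selected coefficients
  set r : {x // x ∈ T} → MvPolynomial (Fin (n + 1)) V :=
    fun t => if dt t ≤ d then homogeneousComponent (d - dt t) (q t) else 0 with hr
  have hdec : h = ∑ t : {x // x ∈ T}, r t * (t : MvPolynomial (Fin (n + 1)) V) := by
    have step1 : ∀ t : {x // x ∈ T},
        r t * (t : MvPolynomial (Fin (n + 1)) V)
          = homogeneousComponent d (q (t : MvPolynomial (Fin (n + 1)) V)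
              * (t : MvPolynomial (Fin (n + 1)) V)) := fun t =>
      (homogeneousComponent_mul_right (q (t : MvPolynomial (Fin (n + 1)) V))
        (t : MvPolynomial (Fin (n + 1)) V) d (hdt t)).symm
    simp_rw [step1]
    rw [← map_sum]
    have : (∑ t : {x // x ∈ T}, q (t : MvPolynomial (Fin (n + 1)) V)
        * (t : MvPolynomial (Fin (n + 1)) V)) = h := by
      rw [← hq, Finset.univ_eq_attach, Finset.sum_attach T (fun x => q x * x)]
      simp_rw [smul_eq_mul]
    rw [this, homogeneousComponent_of_mem hhom, if_pos rfl]
  refine ⟨fun i => deh n V (r (e.symm i)), ?_, ?_⟩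
  · calc g = deh n V h := by rw [hh, deh_homz]
    _ = ∑ t : {x // x ∈ T}, deh n V (r t) * deh n V (t : MvPolynomial (Fin (n + 1)) V) := by
        rw [hdec, map_sum]; simp_rw [map_mul]
    _ = ∑ i, deh n V (r (e.symm i)) * deh n V ((e.symm i : MvPolynomial (Fin (n + 1)) V)) :=
        (Equiv.sum_comp e.symm _).symm
  · intro i
    dsimp only
    set t := e.symm i with hti
    by_cases hle : dt t ≤ d
    · have hrhom : (r t).IsHomogeneous (d - dt t) := by
        rw [hr]; simp only [if_pos hle]
        exact homogeneousComponent_isHomogeneous _ _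
      have h1 : (deh n V (r t)).totalDegree ≤ d - dt t :=
        le_trans (deh_totalDegree_le _) hrhom.totalDegree_le
      have h2 : (deh n V (t : MvPolynomial (Fin (n + 1)) V)).totalDegree ≤ dt t :=
        le_trans (deh_totalDegree_le _) (hdt t).totalDegree_le
      constructor
      · omega
      · refine le_trans (totalDegree_mul _ _) ?_
        omega
    · have hr0 : r t = 0 := by rw [hr]; simp only [if_neg hle]
      rw [hr0, map_zero]
      simp
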